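/- The implicit midpoint rule defines a symplectic map: let Ω ⊆ ℝ^{2n} be open, H : ℝ^{2n} → ℝ be C², h ∈ ℝ, and let Ψ : Ω → ℝ^{2n} be a differentiable map satisfying Ψ(y) = y + h·J⁻¹∇H((y + Ψ(y))/2) for all y ∈ Ω. Then for every y ∈ Ω the Jacobian satisfies DΨ(y)ᵀ·J·DΨ(y) = J. -/

import Mathlib

open Matrix

noncomputable section

/-- Phase space ℝ^{2n}, with coordinates indexed by `Fin n ⊕ Fin n`
(`Sum.inl` = momentum coordinates `p`, `Sum.inr` = position coordinates `q`). -/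
abbrev Phase (n : ℕ) := EuclideanSpace ℝ (Fin n ⊕ Fin n)

def toPhase {n : ℕ} (v : (Fin n ⊕ Fin n) → ℝ) : Phase n := WithLp.toLp 2 v

def ofPhase {n : ℕ} (y : Phase n) : (Fin n ⊕ Fin n) → ℝ := y

/-- The canonical symplectic matrix `J = [[0, I], [-I, 0]]`. -/
def J (n : ℕ) : Matrix (Fin n ⊕ Fin n) (Fin n ⊕ Fin n) ℝ :=
  Matrix.fromBlocks 0 1 (-1) 0

/-- The symplectic gradient (Hamiltonian vector field) `J⁻¹ ∇H`. -/
def sympGrad {n : ℕ} (H : Phase n → ℝ) (y : Phase n) : Phase n :=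
  toPhase ((J n)⁻¹.mulVec (ofPhase (gradient H y)))

/-- The Jacobian matrix of a map on phase space. -/
def jacMatrix {n : ℕ} (f : Phase n → Phase n) (y : Phase n) :
    Matrix (Fin n ⊕ Fin n) (Fin n ⊕ Fin n) ℝ :=
  Matrix.of fun i j => ofPhase (fderiv ℝ f y (EuclideanSpace.single j 1)) i

/-! ### Auxiliary lemmas -/

lemma aux_matrix_alg {ι : Type*} [Fintype ι] [DecidableEq ι]
    (Jm S A : Matrix ι ι ℝ) (hJJ : Jm * Jm = -1) (hJT : Jmᵀ = -Jm) (hS : Sᵀ = S)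
    (c : ℝ) (hA : A = 1 + (Jm⁻¹ * (c • S)) * (1 + A)) :
    Aᵀ * Jm * A = Jm := by
  have hJinv : Jm⁻¹ = -Jm := by
    apply Matrix.inv_eq_right_inv
    rw [Matrix.mul_neg, hJJ, neg_neg]
  set K : Matrix ι ι ℝ := c • S with hK
  have hKs : Kᵀ = K := by rw [hK, Matrix.transpose_smul, hS]
  rw [hJinv] at hA
  set M : Matrix ι ι ℝ := 1 + Jm * K with hM
  set N : Matrix ι ι ℝ := 1 - Jm * K with hN
  set C : Matrix ι ι ℝ := (2:ℝ)⁻¹ • (1 + A) with hC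
  have h2 : M * (1 + A) = (2:ℝ) • 1 := by
    have h0 : (-Jm * K) * (1 + A) = A - 1 := by
      nth_rewrite 2 [hA]; noncomm_ring
    have h' : (Jm * K) * (1 + A) = -(A - 1) := by
      rw [← h0]; noncomm_ring
    rw [hM, add_mul, one_mul, h', two_smul]; abel
  have h1 : M * C = 1 := by
    rw [hC, Matrix.mul_smul, h2, smul_smul]
    norm_num
  have h1' : C * M = 1 := mul_eq_one_comm.mp h1
  have hMA : M * A = N := by
    have h0 : (-Jm * K) * (1 + A) = A - 1 := by
      nth_rewrite 2 [hA]; noncomm_ring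
    rw [hM, hN]
    have hx : (Jm * K) * (1 + A) = 1 - A := by rw [← neg_sub A 1, ← h0]; noncomm_ring
    have expand : (1 + Jm * K) * A = A + ((Jm*K)*(1+A) - Jm*K) := by noncomm_ring
    rw [expand, hx]; noncomm_ring
  have hA' : A = C * N := by
    calc A = (C * M) * A := by rw [h1', one_mul]
    _ = C * (M * A) := by rw [Matrix.mul_assoc]
    _ = C * N := by rw [hMA]
  have hMN : M * N = N * M := by rw [hM, hN]; noncomm_ring
  have hCN : C * N = N * C := by
    calc C * N = C * N * (M * C) := by rw [h1, Matrix.mul_one]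
    _ = C * (N * M) * C := by simp only [Matrix.mul_assoc]
    _ = C * (M * N) * C := by rw [hMN]
    _ = (C * M) * (N * C) := by simp only [Matrix.mul_assoc]
    _ = N * C := by rw [h1', one_mul]
  have key : Mᵀ * Jm * M = Nᵀ * Jm * N := by
    have hMT : Mᵀ = 1 - K * Jm := by
      rw [hM, Matrix.transpose_add, Matrix.transpose_one, Matrix.transpose_mul, hKs, hJT]
      noncomm_ring
    have hNT : Nᵀ = 1 + K * Jm := by
      rw [hN, Matrix.transpose_sub, Matrix.transpose_one, Matrix.transpose_mul, hKs, hJT]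
      noncomm_ring
    have e1 : (1 - K * Jm) * Jm * (1 + Jm * K)
        = Jm + (Jm*Jm)*K - K*(Jm*Jm) - K*((Jm*Jm)*(Jm*K)) := by noncomm_ring
    have e2 : (1 + K * Jm) * Jm * (1 - Jm * K)
        = Jm - (Jm*Jm)*K + K*(Jm*Jm) - K*((Jm*Jm)*(Jm*K)) := by noncomm_ring
    rw [hMT, hNT, hM, hN, e1, e2, hJJ]
    noncomm_ring
  calc Aᵀ * Jm * A = (N * C)ᵀ * Jm * (N * C) := by rw [← hCN, ← hA']
  _ = Cᵀ * (Nᵀ * Jm * N) * C := by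
      rw [Matrix.transpose_mul]; simp only [Matrix.mul_assoc]
  _ = Cᵀ * (Mᵀ * Jm * M) * C := by rw [key]
  _ = (M * C)ᵀ * Jm * (M * C) := by
      rw [Matrix.transpose_mul]; simp only [Matrix.mul_assoc]
  _ = Jm := by rw [h1]; simp

lemma aux_J_mul_J (n : ℕ) : J n * J n = -1 := by
  have h1 : Matrix.fromBlocks (-1 : Matrix (Fin n) (Fin n) ℝ) 0 0 (-1)
      = (-1 : Matrix (Fin n ⊕ Fin n) (Fin n ⊕ Fin n) ℝ) := by
    ext i j
    rcases i with i | i <;> rcases j with j | j <;>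
      simp [Matrix.one_apply, Sum.inl.injEq, Sum.inr.injEq]
  simp only [_root_.J, Matrix.fromBlocks_multiply, Matrix.mul_one, Matrix.mul_zero,
    Matrix.zero_mul, Matrix.mul_neg, Matrix.one_mul, add_zero, zero_add, Matrix.neg_mul,
    neg_zero, Matrix.zero_mul]
  convert h1 using 2

lemma aux_J_transpose (n : ℕ) : (J n)ᵀ = -(J n) := by
  simp [_root_.J, Matrix.fromBlocks_transpose, Matrix.fromBlocks_neg]

lemma aux_euclid_decomp {ι : Type*} [Fintype ι] [DecidableEq ι] (v : EuclideanSpace ℝ ι) :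
    v = ∑ k, v k • EuclideanSpace.single k (1:ℝ) := by
  ext i
  rw [show (∑ k, v k • EuclideanSpace.single k (1:ℝ)) i
      = ∑ k, (v k • EuclideanSpace.single k (1:ℝ)) i from
    by rw [WithLp.ofLp_sum]; exact Finset.sum_apply i Finset.univ _]
  simp [EuclideanSpace.single_apply]

lemma aux_euclid_coord {ι : Type*} [Fintype ι] [DecidableEq ι] (v : EuclideanSpace ℝ ι) (i : ι) :
    v i = inner ℝ v (EuclideanSpace.single i (1:ℝ)) := by
  rw [EuclideanSpace.inner_single_right]; simp

/-- Real `toDual.symm` as a continuous linear map. -/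
def dualCLM (n : ℕ) : StrongDual ℝ (Phase n) →L[ℝ] Phase n :=
  LinearMap.toContinuousLinearMap
    { toFun := fun φ => (InnerProductSpace.toDual ℝ (Phase n)).symm φ
      map_add' := fun φ ψ => by simp
      map_smul' := fun c φ => by simp }

lemma dualCLM_coord {n : ℕ} (φ : StrongDual ℝ (Phase n)) (i : Fin n ⊕ Fin n) :
    dualCLM n φ i = φ (EuclideanSpace.single i 1) := by
  have h0 : dualCLM n φ = (InnerProductSpace.toDual ℝ (Phase n)).symm φ := rfl
  rw [h0]
  exact (aux_euclid_coord _ i).trans (InnerProductSpace.toDual_symm_apply)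

/-- the implicit midpoint rule defines a symplectic map: if `Ψ` is
differentiable on an open `Ω` and satisfies `Ψ(y) = y + h·J⁻¹∇H((y + Ψ(y))/2)` on `Ω`
for a C² Hamiltonian `H`, then `DΨ(y)ᵀ·J·DΨ(y) = J` on `Ω`. -/
theorem stmt17 (n : ℕ) (Ω : Set (Phase n)) (hΩ : IsOpen Ω)
    (H : Phase n → ℝ) (hH : ContDiff ℝ 2 H) (h : ℝ)
    (Ψ : Phase n → Phase n) (hdiff : ∀ y ∈ Ω, DifferentiableAt ℝ Ψ y)
    (hΨ : ∀ y ∈ Ω, Ψ y = y + h • sympGrad H ((2 : ℝ)⁻¹ • (y + Ψ y))) :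
    ∀ y ∈ Ω, (jacMatrix Ψ y)ᵀ * J n * jacMatrix Ψ y = J n := by
  intro y hy
  have hy' : Ω ∈ nhds y := hΩ.mem_nhds hy
  set m : Phase n := (2:ℝ)⁻¹ • (y + Ψ y) with hm
  -- second derivative machinery
  have hfd : ContDiff ℝ 1 (fderiv ℝ H) := hH.fderiv_right (by norm_num)
  set Dg : Phase n →L[ℝ] (Phase n →L[ℝ] ℝ) := fderiv ℝ (fderiv ℝ H) m with hDgdef
  have hDg : HasFDerivAt (fderiv ℝ H) Dg m := (hfd.differentiable one_ne_zero m).hasFDerivAt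
  set grad' : Phase n →L[ℝ] Phase n := (dualCLM n).comp Dg with hgrad'def
  have hgrad : HasFDerivAt (gradient H) grad' m := by
    have h1 : gradient H = fun z => dualCLM n (fderiv ℝ H z) := rfl
    rw [h1]
    exact (dualCLM n).hasFDerivAt.comp m hDg
  set T : Phase n →L[ℝ] Phase n :=
    LinearMap.toContinuousLinearMap (Matrix.toEuclideanLin ((J n)⁻¹)) with hTdef
  have hsymp : HasFDerivAt (sympGrad H) (T.comp grad') m := by
    have h1 : sympGrad H = fun z => T (gradient H z) := rfl
    rw [h1]; exact T.hasFDerivAt.comp m hgrad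
  -- derivative of the midpoint map
  set G : Phase n →L[ℝ] Phase n :=
    (2:ℝ)⁻¹ • (ContinuousLinearMap.id ℝ (Phase n) + fderiv ℝ Ψ y) with hGdef
  have hg : HasFDerivAt (fun z => (2:ℝ)⁻¹ • (z + Ψ z)) G y :=
    ((hasFDerivAt_id y).add (hdiff y hy).hasFDerivAt).const_smul (2:ℝ)⁻¹
  -- derivative of Ψ via the fixed point equation
  set D : Phase n →L[ℝ] Phase n :=
    ContinuousLinearMap.id ℝ (Phase n) + h • ((T.comp grad').comp G) with hDdef
  have hD : HasFDerivAt Ψ D y := by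
    have hRHS : HasFDerivAt (fun z => z + h • sympGrad H ((2:ℝ)⁻¹ • (z + Ψ z))) D y :=
      (hasFDerivAt_id y).add ((hsymp.comp y hg).const_smul h)
    refine hRHS.congr_of_eventuallyEq ?_
    filter_upwards [hy'] with z hz
    exact hΨ z hz
  have hfder : fderiv ℝ Ψ y = D := hD.fderiv
  -- the Hessian matrix
  set S : Matrix (Fin n ⊕ Fin n) (Fin n ⊕ Fin n) ℝ :=
    Matrix.of (fun i j => Dg (EuclideanSpace.single j 1) (EuclideanSpace.single i 1)) with hSdef
  have hS : Sᵀ = S := by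
    ext i j
    have hsym := (hH.contDiffAt (x := m)).isSymmSndFDerivAt (by simp [minSmoothness_of_isRCLikeNormedField])
    simp only [hSdef, Matrix.transpose_apply, Matrix.of_apply]
    exact hsym _ _
  set A : Matrix (Fin n ⊕ Fin n) (Fin n ⊕ Fin n) ℝ := jacMatrix Ψ y with hAdef
  -- entrywise computation of the key matrix identity
  have hAeq : A = 1 + ((J n)⁻¹ * ((h * (2:ℝ)⁻¹) • S)) * (1 + A) := by
    ext i j
    have hAcol : ∀ k, A k j = fderiv ℝ Ψ y (EuclideanSpace.single j 1) k := fun k => rfl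
    set w : Phase n := G (EuclideanSpace.single j 1) with hw
    have hwk : ∀ k, w k = (2:ℝ)⁻¹ * ((1 : Matrix (Fin n ⊕ Fin n) (Fin n ⊕ Fin n) ℝ) k j + A k j) := by
      intro k
      rw [hw, hGdef]
      simp only [ContinuousLinearMap.smul_apply, ContinuousLinearMap.add_apply,
        ContinuousLinearMap.id_apply, PiLp.smul_apply, PiLp.add_apply, smul_eq_mul]
      rw [hAcol k, Matrix.one_apply, EuclideanSpace.single_apply]
    -- the gradient derivative applied to w, in coordinates
    have hgw : ∀ l, grad' w l = ∑ k, w k * S l k := by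
      intro l
      rw [hgrad'def]
      rw [ContinuousLinearMap.comp_apply, dualCLM_coord]
      conv_lhs => rw [show (w : Phase n) = ∑ k, w k • EuclideanSpace.single k (1:ℝ) from
        aux_euclid_decomp w]
      rw [map_sum]
      rw [ContinuousLinearMap.sum_apply]
      refine Finset.sum_congr rfl fun k _ => ?_
      rw [_root_.map_smul, ContinuousLinearMap.smul_apply, smul_eq_mul]
      rfl
    have hTw : ∀ (u : Phase n), T u i = ∑ l, (J n)⁻¹ i l * u l := fun u => rfl
    -- left side entry
    have lhs_eq : A i j = (1 : Matrix (Fin n ⊕ Fin n) (Fin n ⊕ Fin n) ℝ) i j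
        + h * ∑ l, (J n)⁻¹ i l * ∑ k, w k * S l k := by
      rw [hAcol i, hfder, hDdef]
      simp only [ContinuousLinearMap.add_apply, ContinuousLinearMap.id_apply,
        ContinuousLinearMap.smul_apply, ContinuousLinearMap.comp_apply, PiLp.add_apply,
        PiLp.smul_apply, smul_eq_mul]
      rw [← hw, hTw (grad' w), EuclideanSpace.single_apply, Matrix.one_apply]
      rw [show ∑ l, (J n)⁻¹ i l * grad' w l = ∑ l, (J n)⁻¹ i l * ∑ k, w k * S l k from
        Finset.sum_congr rfl fun l _ => by rw [hgw l]]
    rw [lhs_eq]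
    simp only [Matrix.add_apply, Matrix.mul_apply, Matrix.smul_apply, smul_eq_mul,
      Matrix.one_apply]
    congr 1
    simp only [Finset.mul_sum, Finset.sum_mul]
    conv_rhs => rw [Finset.sum_comm]
    refine Finset.sum_congr rfl fun l _ => Finset.sum_congr rfl fun k _ => ?_
    rw [hwk k]
    simp only [Matrix.one_apply]
    ring
  exact aux_matrix_alg (J n) S A (aux_J_mul_J n) (aux_J_transpose n) hS (h * (2:ℝ)⁻¹) hAeq
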